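/- For all real numbers r, s with 0 ≤ r < s < 1/2, setting λ := (s−r)/(1−2r), one has (π/2)·∫_r^s dτ/(1−2τ) = (π/2)·∫₀^λ dτ/(1−2τ), and if moreover λ ≤ 1/π then (π/2)·∫₀^λ dτ/(1−2τ) > (1/2)·arcsin(πλ). -/

import Mathlib

open MeasureTheory

private lemma hasDeriv_neg_half_log (τ : ℝ) (h : τ < 1/2) :
    HasDerivAt (fun t : ℝ => -(1/2) * Real.log (1 - 2*t)) (1/(1 - 2*τ)) τ := by
  have hne : (1 : ℝ) - 2*τ ≠ 0 := by nlinarith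
  have h1 : HasDerivAt (fun t : ℝ => 1 - 2*t) (-2) τ := by
    simpa using ((hasDerivAt_id τ).const_mul (2:ℝ)).const_sub 1
  have h2 := (h1.log hne).const_mul (-(1/2) : ℝ)
  convert h2 using 1
  · rfl
  · rfl
  · field_simp

private lemma integral_aux (a b : ℝ) (ha : a < 1/2) (hb : b < 1/2) :
    (∫ τ in a..b, 1/(1 - 2*τ)) =
      (1/2) * Real.log (1 - 2*a) - (1/2) * Real.log (1 - 2*b) := by
  have hhalf : ∀ x ∈ Set.uIcc a b, x < 1/2 := by
    intro x hx
    rcases Set.mem_uIcc.1 hx with h | h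
    · exact lt_of_le_of_lt h.2 hb
    · exact lt_of_le_of_lt h.2 ha
  have hcont : ContinuousOn (fun τ : ℝ => 1/(1 - 2*τ)) (Set.uIcc a b) := by
    apply ContinuousOn.div continuousOn_const
    · exact continuousOn_const.sub (continuousOn_const.mul continuousOn_id)
    · intro x hx
      have := hhalf x hx
      nlinarith
  have := intervalIntegral.integral_eq_sub_of_hasDerivAt
    (f := fun t : ℝ => -(1/2) * Real.log (1 - 2*t))
    (f' := fun τ : ℝ => 1/(1 - 2*τ)) (a := a) (b := b)
    (fun x hx => hasDeriv_neg_half_log x (hhalf x hx))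
    hcont.intervalIntegrable
  rw [this]; ring

private lemma g_hasDeriv (x : ℝ) (hx2 : x < 1/2) (hx1 : (Real.pi * x)^2 < 1) :
    HasDerivAt (fun t : ℝ => (Real.pi/2) * -Real.log (1 - 2*t) - Real.arcsin (Real.pi * t))
      (Real.pi/(1 - 2*x) - Real.pi/Real.sqrt (1 - (Real.pi*x)^2)) x := by
  have hne : (1 : ℝ) - 2*x ≠ 0 := by nlinarith
  have h1 : HasDerivAt (fun t : ℝ => 1 - 2*t) (-2) x := by
    simpa using ((hasDerivAt_id x).const_mul (2:ℝ)).const_sub 1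
  have hlog := ((h1.log hne).neg).const_mul (Real.pi/2)
  have hne1 : Real.pi * x ≠ 1 := by
    intro h; rw [h] at hx1; norm_num at hx1
  have hnem1 : Real.pi * x ≠ -1 := by
    intro h; rw [h] at hx1; norm_num at hx1
  have hpi : HasDerivAt (fun t : ℝ => Real.pi * t) Real.pi x := by
    simpa using (hasDerivAt_id x).const_mul Real.pi
  have harcsin := (Real.hasDerivAt_arcsin hnem1 hne1).comp x hpi
  have h := hlog.sub harcsin
  convert h using 1
  have hsne : Real.sqrt (1 - (Real.pi*x)^2) ≠ 0 :=
    ne_of_gt (Real.sqrt_pos.mpr (by nlinarith))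
  · rfl
  · rfl
  · rfl
  · field_simp

-- key inequality: for 0 < λ ≤ 1/π, arcsin (π λ) < -(π/2) log(1-2λ).
set_option maxHeartbeats 1000000 in
private lemma key_ineq (l : ℝ) (h0 : 0 < l) (h1 : l ≤ 1/Real.pi) :
    Real.arcsin (Real.pi * l) < (Real.pi/2) * -Real.log (1 - 2*l) := by
  have hpi := Real.pi_gt_three
  have hpi' := Real.pi_lt_d2
  set g : ℝ → ℝ := fun t => (Real.pi/2) * -Real.log (1 - 2*t) - Real.arcsin (Real.pi * t)
    with hg
  have hlhalf : l < 1/2 := by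
    calc l ≤ 1/Real.pi := h1
    _ < 1/2 := by
      rw [div_lt_div_iff₀ (by positivity) (by norm_num)]
      linarith
  set l0 : ℝ := 4/(4 + Real.pi^2) with hl0
  have hl0pos : 0 < l0 := by positivity
  have hl0lt : l0 < 1/Real.pi := by
    rw [hl0, div_lt_div_iff₀ (by positivity) (by positivity)]
    nlinarith [sq_nonneg (Real.pi - 2)]
  -- value at 1/π is positive
  have hval : 0 < g (1/Real.pi) := by
    have harg : Real.pi * (1/Real.pi) = 1 := by
      field_simp
    have hlog : Real.log (1 - 2*(1/Real.pi)) < -1 := by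
      have hx : (0:ℝ) < 1 - 2*(1/Real.pi) := by
        rw [lt_sub_iff_add_lt]
        rw [div_lt_iff₀ (by positivity)] at *
        nlinarith
      rw [Real.log_lt_iff_lt_exp hx,
        show (1:ℝ) - 2*(1/Real.pi) = (Real.pi - 2)/Real.pi by field_simp,
        show Real.exp (-1) = 1/Real.exp 1 by rw [Real.exp_neg, inv_eq_one_div],
        div_lt_div_iff₀ Real.pi_pos (Real.exp_pos 1)]
      nlinarith [Real.pi_lt_d6, Real.exp_one_lt_d9, Real.exp_one_gt_d9,
        Real.pi_gt_d6]
    simp only [hg, harg, Real.arcsin_one]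
    nlinarith
  rcases le_or_gt l l0 with hcase | hcase
  · -- g strictly monotone on [0, l0]
    have hmono : StrictMonoOn g (Set.Icc 0 l0) := by
      apply strictMonoOn_of_deriv_pos (convex_Icc 0 l0)
      · apply ContinuousOn.sub
        · apply ContinuousOn.mul continuousOn_const
          apply ContinuousOn.neg
          apply ContinuousOn.log
          · exact continuousOn_const.sub (continuousOn_const.mul continuousOn_id)
          · intro x hx
            have : x < 1/2 := lt_of_le_of_lt hx.2 (lt_trans hl0lt (by
              rw [div_lt_div_iff₀ (by positivity) (by norm_num)]; linarith))
            nlinarith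
        · exact (Real.continuous_arcsin.comp (continuous_const.mul continuous_id)).continuousOn
      · intro x hx
        rw [interior_Icc] at hx
        obtain ⟨hx0, hxl0⟩ := hx
        have hx110 : x < 1/Real.pi := lt_trans hxl0 hl0lt
        have hxhalf : x < 1/2 := by
          calc x < 1/Real.pi := hx110
          _ < 1/2 := by rw [div_lt_div_iff₀ (by positivity) (by norm_num)]; linarith
        have hpix : Real.pi * x < 1 := by
          rw [lt_div_iff₀ (by positivity)] at hx110; linarith
        have hpix0 : 0 < Real.pi * x := by positivity
        have hsq : (Real.pi * x)^2 < 1 := by nlinarith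
        rw [(g_hasDeriv x hxhalf hsq).deriv]
        have h2x : (0:ℝ) < 1 - 2*x := by linarith
        have hkey : 1 - 2*x < Real.sqrt (1 - (Real.pi*x)^2) := by
          rw [show (1:ℝ) - 2*x = Real.sqrt ((1-2*x)^2) by
            rw [Real.sqrt_sq h2x.le]]
          apply Real.sqrt_lt_sqrt (by positivity)
          have : (4 + Real.pi^2) * x < 4 := by
            rw [hl0, lt_div_iff₀ (by positivity)] at hxl0
            linarith
          nlinarith
        have hs0 : 0 < Real.sqrt (1 - (Real.pi*x)^2) := lt_trans h2x hkey
        have := div_lt_div_of_pos_left Real.pi_pos h2x hkey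
        linarith
    have := hmono (Set.mem_Icc.mpr ⟨le_refl 0, hl0pos.le⟩)
      (Set.mem_Icc.mpr ⟨h0.le, hcase⟩) h0
    have hg0 : g 0 = 0 := by simp [hg]
    rw [hg0] at this
    simp only [hg] at this
    linarith
  · -- g strictly antitone on [l0, 1/π]
    have hanti : StrictAntiOn g (Set.Icc l0 (1/Real.pi)) := by
      apply strictAntiOn_of_deriv_neg (convex_Icc l0 (1/Real.pi))
      · apply ContinuousOn.sub
        · apply ContinuousOn.mul continuousOn_const
          apply ContinuousOn.neg
          apply ContinuousOn.log
          · exact continuousOn_const.sub (continuousOn_const.mul continuousOn_id)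
          · intro x hx
            have : x < 1/2 := lt_of_le_of_lt hx.2 (by
              rw [div_lt_div_iff₀ (by positivity) (by norm_num)]; linarith)
            nlinarith
        · exact (Real.continuous_arcsin.comp (continuous_const.mul continuous_id)).continuousOn
      · intro x hx
        rw [interior_Icc] at hx
        obtain ⟨hxl0, hx110⟩ := hx
        have hx0 : 0 < x := lt_trans hl0pos hxl0
        have hxhalf : x < 1/2 := by
          calc x < 1/Real.pi := hx110
          _ < 1/2 := by rw [div_lt_div_iff₀ (by positivity) (by norm_num)]; linarith
        have hpix : Real.pi * x < 1 := by
          rw [lt_div_iff₀ (by positivity)] at hx110; linarith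
        have hpix0 : 0 < Real.pi * x := by positivity
        have hsq : (Real.pi * x)^2 < 1 := by nlinarith
        rw [(g_hasDeriv x hxhalf hsq).deriv]
        have h2x : (0:ℝ) < 1 - 2*x := by linarith
        have hkey : Real.sqrt (1 - (Real.pi*x)^2) < 1 - 2*x := by
          rw [show (1:ℝ) - 2*x = Real.sqrt ((1-2*x)^2) by
            rw [Real.sqrt_sq h2x.le]]
          apply Real.sqrt_lt_sqrt (by nlinarith)
          have : 4 < (4 + Real.pi^2) * x := by
            rw [hl0, div_lt_iff₀ (by positivity)] at hxl0
            linarith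
          nlinarith
        have hs0 : 0 < Real.sqrt (1 - (Real.pi*x)^2) := Real.sqrt_pos.mpr (by nlinarith)
        have := div_lt_div_of_pos_left Real.pi_pos hs0 hkey
        linarith
    rcases eq_or_lt_of_le h1 with heq | hlt
    · have : g l > 0 := heq ▸ hval
      simp only [hg] at this
      linarith
    · have := hanti (Set.mem_Icc.mpr ⟨hcase.le, h1⟩)
        (Set.mem_Icc.mpr ⟨hl0lt.le, le_refl _⟩) hlt
      have : 0 < g l := lt_trans hval this
      simp only [hg] at this
      linarith

theorem affine_case_integral_eq_and_gt_arcsin (r s : ℝ) (hr : 0 ≤ r) (hrs : r < s)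
    (hs : s < 1/2) :
    (Real.pi/2) * (∫ τ in r..s, 1/(1 - 2*τ)) =
        (Real.pi/2) * (∫ τ in (0:ℝ)..((s - r)/(1 - 2*r)), 1/(1 - 2*τ)) ∧
      ((s - r)/(1 - 2*r) ≤ 1/Real.pi →
        (Real.pi/2) * (∫ τ in (0:ℝ)..((s - r)/(1 - 2*r)), 1/(1 - 2*τ)) >
          (1/2) * Real.arcsin (Real.pi * ((s - r)/(1 - 2*r)))) := by
  have hr2 : (0:ℝ) < 1 - 2*r := by linarith
  have hs2 : (0:ℝ) < 1 - 2*s := by linarith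
  set l : ℝ := (s - r)/(1 - 2*r) with hl
  have hlpos : 0 < l := div_pos (by linarith) hr2
  have hlhalf : l < 1/2 := by
    rw [hl, div_lt_div_iff₀ hr2 (by norm_num)]
    linarith
  have hint1 : (∫ τ in r..s, 1/(1 - 2*τ)) =
      (1/2) * Real.log (1 - 2*r) - (1/2) * Real.log (1 - 2*s) :=
    integral_aux r s (by linarith) hs
  have hint2 : (∫ τ in (0:ℝ)..l, 1/(1 - 2*τ)) =
      (1/2) * Real.log (1 - 2*0) - (1/2) * Real.log (1 - 2*l) :=
    integral_aux 0 l (by norm_num) hlhalf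
  have hlval : 1 - 2*l = (1 - 2*s)/(1 - 2*r) := by
    rw [hl]; field_simp; ring
  have hlog : Real.log (1 - 2*l) = Real.log (1 - 2*s) - Real.log (1 - 2*r) := by
    rw [hlval, Real.log_div (by positivity) (by positivity)]
  constructor
  · rw [hint1, hint2, hlog]
    norm_num
    ring
  · intro h1
    have hkey := key_ineq l hlpos h1
    rw [hint2]
    norm_num
    nlinarith [hkey]
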